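/- Let φ : ℕ → ℝ≥0 be nondecreasing and concave, and fix q ∈ [0,1]. Then the function g_q : ℕ → ℝ defined by g_q(n) = E[φ(Bin(n,q))] is nondecreasing and concave, i.e. g_q(n+1) ≥ g_q(n) and g_q(n+2) - g_q(n+1) ≤ g_q(n+1) - g_q(n) for all n. -/

import Mathlib

lemma binom_step (q : ℝ) (f : ℕ → ℝ) (n : ℕ) :
    ∑ k ∈ Finset.range (n + 2), f k * ((n+1).choose k) * q ^ k * (1 - q) ^ (n + 1 - k)
    = ∑ k ∈ Finset.range (n + 1),
        ((1-q) * f k + q * f (k+1)) * (n.choose k) * q ^ k * (1 - q) ^ (n - k) := by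
  rw [Finset.sum_range_succ']
  have h1 : ∀ k ∈ Finset.range (n+1),
      f (k+1) * (((n+1).choose (k+1)) : ℝ) * q ^ (k+1) * (1 - q) ^ (n + 1 - (k+1))
      = f (k+1) * (n.choose k) * q ^ (k+1) * (1 - q) ^ (n - k)
        + f (k+1) * (n.choose (k+1)) * q ^ (k+1) * (1 - q) ^ (n - k) := by
    intro k hk
    rw [Nat.choose_succ_succ]
    push_cast
    simp only [Nat.succ_eq_add_one]
    ring
  rw [Finset.sum_congr rfl h1, Finset.sum_add_distrib]
  have h2 : ∑ k ∈ Finset.range (n+1),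
      f (k+1) * ((n.choose (k+1)) : ℝ) * q ^ (k+1) * (1 - q) ^ (n - k)
      = ∑ k ∈ Finset.range (n+1),
        (1-q) * f (k+1) * (n.choose (k+1)) * q ^ (k+1) * (1 - q) ^ (n - (k+1)) := by
    rw [Finset.sum_range_succ, Finset.sum_range_succ]
    simp only [Nat.choose_succ_self, Nat.cast_zero, mul_zero, zero_mul, add_zero]
    apply Finset.sum_congr rfl
    intro k hk
    simp only [Finset.mem_range] at hk
    have : n - k = (n - (k+1)) + 1 := by omega
    rw [this]; ring
  rw [h2]
  have h3 : f 0 * (((n+1).choose 0 : ℕ) : ℝ) * q ^ 0 * (1 - q) ^ (n + 1 - 0)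
      = (1-q) * f 0 * (n.choose 0) * q ^ 0 * (1 - q) ^ (n - 0) := by
    simp [pow_succ]; ring
  rw [h3]
  have h4 := (Finset.sum_range_succ'
      (fun k => (1-q) * f k * ((n.choose k) : ℝ) * q ^ k * (1 - q) ^ (n - k)) (n+1)).symm
  have h5 : ∑ k ∈ Finset.range (n + 1 + 1),
      (1 - q) * f k * ((n.choose k) : ℝ) * q ^ k * (1 - q) ^ (n - k)
      = ∑ k ∈ Finset.range (n + 1),
      (1 - q) * f k * ((n.choose k) : ℝ) * q ^ k * (1 - q) ^ (n - k) := by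
    rw [Finset.sum_range_succ]
    simp
  rw [add_assoc, h4, h5, ← Finset.sum_add_distrib]
  apply Finset.sum_congr rfl
  intro k hk
  ring

/-- For nondecreasing concave `φ : ℕ → ℝ≥0` and `q ∈ [0,1]`, the function
`g_q(n) = E[φ(Bin(n,q))]` is nondecreasing and concave in `n`. -/
theorem stmt3 (φ : ℕ → ℝ) (hφnn : ∀ k, 0 ≤ φ k) (hφmono : Monotone φ)
    (hφconc : ∀ k, φ (k + 2) - φ (k + 1) ≤ φ (k + 1) - φ k)
    (q : ℝ) (hq : q ∈ Set.Icc (0 : ℝ) 1)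
    (g : ℕ → ℝ)
    (hg : ∀ n, g n = ∑ k ∈ Finset.range (n + 1),
      φ k * (n.choose k) * q ^ k * (1 - q) ^ (n - k)) :
    ∀ n : ℕ, g n ≤ g (n + 1) ∧ g (n + 2) - g (n + 1) ≤ g (n + 1) - g n := by
  obtain ⟨hq0, hq1⟩ := hq
  have hp0 : (0:ℝ) ≤ 1 - q := by linarith
  set d : ℕ → ℝ := fun k => φ (k+1) - φ k with hd
  set D : ℕ → ℝ := fun n => ∑ k ∈ Finset.range (n + 1),
      d k * (n.choose k) * q ^ k * (1 - q) ^ (n - k) with hD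
  -- key recurrence: g (n+1) = g n + q * D n
  have key : ∀ n, g (n + 1) = g n + q * D n := by
    intro n
    rw [hg (n+1), hg n]
    have := binom_step q φ n
    rw [show n + 1 + 1 = n + 2 from rfl, this]
    rw [hD]
    simp only [hd]
    rw [Finset.mul_sum, ← Finset.sum_add_distrib]
    apply Finset.sum_congr rfl
    intro k hk
    ring
  -- termwise nonnegativity gives 0 ≤ D n
  have hDnn : ∀ n, 0 ≤ D n := by
    intro n
    apply Finset.sum_nonneg
    intro k hk
    have h1 : 0 ≤ d k := by simp only [hd]; have := hφmono (Nat.le_succ k); linarith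
    positivity
  -- D is antitone in n
  have hDmono : ∀ n, D (n + 1) ≤ D n := by
    intro n
    have hstep := binom_step q d n
    rw [hD]
    simp only
    rw [show n + 1 + 1 = n + 2 from rfl, hstep]
    apply Finset.sum_le_sum
    intro k hk
    have h1 : d (k+1) ≤ d k := by simp only [hd]; exact hφconc k
    have h2 : (1 - q) * d k + q * d (k+1) ≤ d k := by nlinarith
    have h3 : (0:ℝ) ≤ (n.choose k : ℝ) * q ^ k * (1 - q) ^ (n - k) := by positivity
    calc ((1 - q) * d k + q * d (k+1)) * (n.choose k) * q ^ k * (1 - q) ^ (n - k)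
        = ((1 - q) * d k + q * d (k+1)) * ((n.choose k) * q ^ k * (1 - q) ^ (n - k)) := by ring
      _ ≤ d k * ((n.choose k) * q ^ k * (1 - q) ^ (n - k)) := by
          exact mul_le_mul_of_nonneg_right h2 h3
      _ = d k * (n.choose k) * q ^ k * (1 - q) ^ (n - k) := by ring
  intro n
  constructor
  · rw [key n]
    have := mul_nonneg hq0 (hDnn n)
    linarith
  · rw [key (n+1), key n]
    have := mul_le_mul_of_nonneg_left (hDmono n) hq0
    linarith
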